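/- Let N ≥ 1 and let w = (w_i^j)_{i,j=1,…,N} be nonnegative reals. Define the function Z : ℝ^N × ℝ^N → ℝ by Z(ρ_1,…,ρ_N, ρ^1,…,ρ^N) = exp(Σ_i ρ_i + Σ_j ρ^j) · ∏_{i,j} (1 + w_i^j e^{−ρ_i − ρ^j}). Then the 2N-th order mixed partial derivative ∂^{2N} Z / (∂ρ_1 ⋯ ∂ρ_N ∂ρ^1 ⋯ ∂ρ^N), evaluated at ρ_1 = ⋯ = ρ_N = ρ^1 = ⋯ = ρ^N = 0, equals Σ_{E ⊆ {1,…,N}×{1,…,N}} ( ∏_{(i,j) ∈ E} w_i^j ) · ( ∏_{i=1}^N (1 − d_i(E)) ) · ( ∏_{j=1}^N (1 − d^j(E)) ), where d_i(E) = |{j : (i,j) ∈ E}| and d^j(E) = |{i : (i,j) ∈ E}|. In particular, only the empty set E (contributing 1) and those E in which every incident vertex has degree ≥ 2 (the generalized loops) contribute to the sum. -/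

import Mathlib

/-- Partial derivative of `f : (ι → ℝ) → ℝ` in the coordinate direction `α`. -/
noncomputable def partialDeriv {ι : Type*} [Fintype ι] [DecidableEq ι] (α : ι)
    (f : (ι → ℝ) → ℝ) : (ι → ℝ) → ℝ :=
  fun x => fderiv ℝ f x (Pi.single α 1)

/-- The degree of left vertex `i` in the edge set `E ⊆ K_{N,N}`. -/
def degL {N : ℕ} (E : Finset (Fin N × Fin N)) (i : Fin N) : ℕ :=
  (E.filter (fun e => e.1 = i)).card

/-- The degree of right vertex `j` in the edge set `E ⊆ K_{N,N}`. -/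
def degR {N : ℕ} (E : Finset (Fin N × Fin N)) (j : Fin N) : ℕ :=
  (E.filter (fun e => e.2 = j)).card

section Aux

variable {ι : Type*} [Fintype ι]

/-- The auxiliary function `ρ ↦ c · exp(∑ a_α ρ_α)`. -/
noncomputable def expLin (a : ι → ℝ) (c : ℝ) : (ι → ℝ) → ℝ :=
  fun ρ => c * Real.exp (∑ α, a α * ρ α)

/-- The linear functional `ρ ↦ ∑ a_α ρ_α` as a continuous linear map. -/
noncomputable def linMap (a : ι → ℝ) : ((ι → ℝ) →L[ℝ] ℝ) :=
  ∑ α, a α • ContinuousLinearMap.proj α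

lemma linMap_apply (a : ι → ℝ) (x : ι → ℝ) : linMap a x = ∑ α, a α * x α := by
  simp [linMap, ContinuousLinearMap.sum_apply]

lemma linMap_single [DecidableEq ι] (a : ι → ℝ) (β : ι) :
    linMap a (Pi.single β 1) = a β := by
  rw [linMap_apply]
  rw [Finset.sum_eq_single β]
  · simp
  · intro b _ hb; simp [Pi.single_apply, hb]
  · simp

lemma hasFDerivAt_expLin (a : ι → ℝ) (c : ℝ) (x : ι → ℝ) :
    HasFDerivAt (expLin a c) ((c * Real.exp (∑ α, a α * x α)) • linMap a) x := by
  have h1 : HasFDerivAt (fun ρ : ι → ℝ => ∑ α, a α * ρ α) (linMap a) x := by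
    have := (linMap a).hasFDerivAt (x := x)
    convert this using 1
    funext y; rw [linMap_apply]
  have h3 := h1.exp.const_mul c
  rw [smul_smul] at h3
  exact h3

lemma partialDeriv_expLin [DecidableEq ι] (a : ι → ℝ) (c : ℝ) (β : ι) :
    partialDeriv β (expLin a c) = expLin a (c * a β) := by
  funext x
  unfold partialDeriv
  rw [(hasFDerivAt_expLin a c x).fderiv]
  simp [linMap_single, expLin]
  ring

lemma partialDeriv_sum_expLin [DecidableEq ι] {κ : Type*} (S : Finset κ)
    (a : κ → ι → ℝ) (c : κ → ℝ) (β : ι) :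
    partialDeriv β (fun ρ => ∑ E ∈ S, expLin (a E) (c E) ρ)
      = fun ρ => ∑ E ∈ S, expLin (a E) (c E * a E β) ρ := by
  funext x
  unfold partialDeriv
  rw [fderiv_fun_sum (fun E _ => (hasFDerivAt_expLin (a E) (c E) x).differentiableAt)]
  rw [ContinuousLinearMap.sum_apply]
  refine Finset.sum_congr rfl fun E _ => ?_
  have := congrFun (partialDeriv_expLin (a E) (c E) β) x
  unfold partialDeriv at this
  exact this

lemma foldr_partialDeriv_sum_expLin [DecidableEq ι] {κ : Type*} (l : List ι) (S : Finset κ)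
    (a : κ → ι → ℝ) (c : κ → ℝ) :
    List.foldr partialDeriv (fun ρ => ∑ E ∈ S, expLin (a E) (c E) ρ) l
      = fun ρ => ∑ E ∈ S, expLin (a E) (c E * (l.map (a E)).prod) ρ := by
  induction l generalizing c with
  | nil => simp
  | cons β l ih =>
      rw [List.foldr_cons, ih, partialDeriv_sum_expLin]
      funext ρ
      refine Finset.sum_congr rfl fun E _ => ?_
      simp only [List.map_cons, List.prod_cons]
      congr 1; ring

end Aux

/-- The exponent coefficients attached to an edge set `E`. -/
def aE {N : ℕ} (E : Finset (Fin N × Fin N)) : Fin N ⊕ Fin N → ℝ :=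
  Sum.elim (fun i => 1 - (degL E i : ℝ)) (fun j => 1 - (degR E j : ℝ))

lemma sum_fst {N : ℕ} (E : Finset (Fin N × Fin N)) (f : Fin N → ℝ) :
    ∑ e ∈ E, f e.1 = ∑ i, (degL E i : ℝ) * f i := by
  rw [← Finset.sum_fiberwise_of_maps_to (g := fun e : Fin N × Fin N => e.1)
    (t := Finset.univ) (fun e _ => Finset.mem_univ _)]
  refine Finset.sum_congr rfl fun i _ => ?_
  have h : ∀ e ∈ E.filter (fun e => e.1 = i), f e.1 = f i := fun e he => by
    simp only [Finset.mem_filter] at he; rw [he.2]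
  rw [Finset.sum_congr rfl h, Finset.sum_const, degL, nsmul_eq_mul]

lemma sum_snd {N : ℕ} (E : Finset (Fin N × Fin N)) (f : Fin N → ℝ) :
    ∑ e ∈ E, f e.2 = ∑ j, (degR E j : ℝ) * f j := by
  rw [← Finset.sum_fiberwise_of_maps_to (g := fun e : Fin N × Fin N => e.2)
    (t := Finset.univ) (fun e _ => Finset.mem_univ _)]
  refine Finset.sum_congr rfl fun j _ => ?_
  have h : ∀ e ∈ E.filter (fun e => e.2 = j), f e.2 = f j := fun e he => by
    simp only [Finset.mem_filter] at he; rw [he.2]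
  rw [Finset.sum_congr rfl h, Finset.sum_const, degR, nsmul_eq_mul]

lemma expandZ {N : ℕ} (w : Fin N → Fin N → ℝ) :
    (fun ρ : (Fin N ⊕ Fin N) → ℝ =>
        Real.exp ((∑ i, ρ (Sum.inl i)) + ∑ j, ρ (Sum.inr j)) *
          ∏ i, ∏ j, (1 + w i j * Real.exp (-ρ (Sum.inl i) - ρ (Sum.inr j))))
      = fun ρ => ∑ E : Finset (Fin N × Fin N),
          expLin (aE E) (∏ e ∈ E, w e.1 e.2) ρ := by
  funext ρ
  have hprod : (∏ i, ∏ j, (1 + w i j * Real.exp (-ρ (Sum.inl i) - ρ (Sum.inr j))))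
      = ∑ E : Finset (Fin N × Fin N),
          ∏ e ∈ E, (w e.1 e.2 * Real.exp (-ρ (Sum.inl e.1) - ρ (Sum.inr e.2))) := by
    rw [← Finset.prod_product']
    have : ∀ e : Fin N × Fin N,
        (1 + w e.1 e.2 * Real.exp (-ρ (Sum.inl e.1) - ρ (Sum.inr e.2)))
        = (w e.1 e.2 * Real.exp (-ρ (Sum.inl e.1) - ρ (Sum.inr e.2))) + 1 := fun e => by ring
    rw [Finset.prod_congr rfl (fun e _ => this e), Finset.prod_add]
    rw [← Finset.powerset_univ]
    refine Finset.sum_congr rfl fun E _ => by simp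
  rw [hprod, Finset.mul_sum]
  refine Finset.sum_congr rfl fun E _ => ?_
  rw [Finset.prod_mul_distrib, ← Real.exp_sum, ← mul_assoc, mul_comm (Real.exp _),
    mul_assoc, ← Real.exp_add, expLin]
  congr 1
  rw [Fintype.sum_sum_type]
  simp only [aE, Sum.elim_inl, Sum.elim_inr]
  have h1 := sum_fst E (fun i => ρ (Sum.inl i))
  have h2 := sum_snd E (fun j => ρ (Sum.inr j))
  simp only [sub_mul, one_mul, Finset.sum_sub_distrib, Finset.sum_neg_distrib]
  rw [← h1, ← h2]
  congr 1
  ring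

/-- The `2N`-th mixed partial derivative (once in each variable
`ρ_1, …, ρ_N, ρ^1, …, ρ^N`) of
`Z(ρ) = exp(Σ_i ρ_i + Σ_j ρ^j) ∏_{i,j} (1 + w_i^j e^{-ρ_i - ρ^j})`, evaluated at the
origin, equals `Σ_{E ⊆ edges} (∏_{(i,j)∈E} w_i^j)(∏_i (1 - d_i(E)))(∏_j (1 - d^j(E)))`.
Moreover every term with `E` nonempty in which some incident vertex has degree < 2
vanishes, so only the empty set (contributing 1) and the generalized loops contribute. -/
theorem mixed_deriv_eq_loop_sum (N : ℕ) (hN : 1 ≤ N)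
    (w : Fin N → Fin N → ℝ) (hw : ∀ i j, 0 ≤ w i j) :
    ((List.foldr partialDeriv
        (fun ρ : (Fin N ⊕ Fin N) → ℝ =>
          Real.exp ((∑ i, ρ (Sum.inl i)) + ∑ j, ρ (Sum.inr j)) *
            ∏ i, ∏ j, (1 + w i j * Real.exp (-ρ (Sum.inl i) - ρ (Sum.inr j))))
        (((List.finRange N).map Sum.inl) ++ ((List.finRange N).map Sum.inr)))
      0 =
      ∑ E : Finset (Fin N × Fin N),
        (∏ e ∈ E, w e.1 e.2) * (∏ i, (1 - (degL E i : ℝ))) *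
          ∏ j, (1 - (degR E j : ℝ))) ∧
    (∀ E : Finset (Fin N × Fin N), E.Nonempty →
      (∃ e ∈ E, degL E e.1 < 2 ∨ degR E e.2 < 2) →
      (∏ e ∈ E, w e.1 e.2) * (∏ i, (1 - (degL E i : ℝ))) *
          ∏ j, (1 - (degR E j : ℝ)) = 0) := by
  constructor
  · rw [expandZ w, foldr_partialDeriv_sum_expLin]
    refine Finset.sum_congr rfl fun E _ => ?_
    have hl : ((((List.finRange N).map Sum.inl) ++ ((List.finRange N).map Sum.inr)).map
        (aE E)).prod = (∏ i, (1 - (degL E i : ℝ))) * ∏ j, (1 - (degR E j : ℝ)) := by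
      rw [List.map_append, List.prod_append, List.map_map, List.map_map]
      rw [Fin.prod_univ_def, Fin.prod_univ_def]
      rfl
    simp only [expLin, Pi.zero_apply, mul_zero, Finset.sum_const, smul_zero, Real.exp_zero,
      mul_one]
    rw [hl]; ring
  · rintro E hE ⟨e, heE, he⟩
    rcases he with h | h
    · have h1 : 1 ≤ degL E e.1 := by
        rw [degL]
        exact Finset.card_pos.mpr ⟨e, Finset.mem_filter.mpr ⟨heE, rfl⟩⟩
      have : degL E e.1 = 1 := by omega
      have hz : (∏ i, (1 - (degL E i : ℝ))) = 0 := by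
        refine Finset.prod_eq_zero (Finset.mem_univ e.1) ?_
        rw [this]; norm_num
      rw [hz]; ring
    · have h1 : 1 ≤ degR E e.2 := by
        rw [degR]
        exact Finset.card_pos.mpr ⟨e, Finset.mem_filter.mpr ⟨heE, rfl⟩⟩
      have : degR E e.2 = 1 := by omega
      have hz : (∏ j, (1 - (degR E j : ℝ))) = 0 := by
        refine Finset.prod_eq_zero (Finset.mem_univ e.2) ?_
        rw [this]; norm_num
      rw [hz]; ring
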